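/- Let $A_1, \ldots, A_r$ be positive semidefinite operators on a finite-dimensional Hilbert space and let $1 \le K \le r$. Let $P_e^*$ denote the optimal error probability functional $P_e^*(B_1,\ldots,B_m) := \min\{\sum_i \operatorname{Tr} B_i(I - E_i) : E_i \ge 0, \sum_i E_i \le I\}$. Then $P_e^*(A_1,\ldots,A_r) \le 2\, P_e^*(A_1,\ldots,A_K) + P_e^*\big(3 \sum_{i=1}^K A_i,\, A_{K+1},\ldots,A_r\big)$. -/

import Mathlib

open Matrix
open scoped ComplexOrder

noncomputable def matAbs {m : ℕ} (A : Matrix (Fin m) (Fin m) ℂ) : Matrix (Fin m) (Fin m) ℂ :=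
  (Matrix.posSemidef_conjTranspose_mul_self A).1.eigenvectorUnitary.1 *
    diagonal ((↑) ∘ (√·) ∘ (Matrix.posSemidef_conjTranspose_mul_self A).1.eigenvalues) *
    (star (Matrix.posSemidef_conjTranspose_mul_self A).1.eigenvectorUnitary : Matrix (Fin m) (Fin m) ℂ)

noncomputable def traceNorm {m : ℕ} (A : Matrix (Fin m) (Fin m) ℂ) : ℝ :=
  ((matAbs A).trace).re

open Classical in
noncomputable def psdSqrt {m : ℕ} (A : Matrix (Fin m) (Fin m) ℂ) : Matrix (Fin m) (Fin m) ℂ :=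
  if h : A.PosSemidef then
    h.1.eigenvectorUnitary.1 * diagonal ((↑) ∘ (√·) ∘ h.1.eigenvalues) *
      (star h.1.eigenvectorUnitary : Matrix (Fin m) (Fin m) ℂ) else 0

noncomputable def fid {m : ℕ} (A B : Matrix (Fin m) (Fin m) ℂ) : ℝ :=
  traceNorm (psdSqrt A * psdSqrt B)

noncomputable def matPosPart {m : ℕ} (A : Matrix (Fin m) (Fin m) ℂ) : Matrix (Fin m) (Fin m) ℂ :=
  (2⁻¹ : ℂ) • (matAbs A + A)

noncomputable def matNegPart {m : ℕ} (A : Matrix (Fin m) (Fin m) ℂ) : Matrix (Fin m) (Fin m) ℂ :=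
  (2⁻¹ : ℂ) • (matAbs A - A)

/-- Optimal error probability of discriminating the hypotheses `B i` with POVMs. -/
noncomputable def multiErr {d m : ℕ} (B : Fin m → Matrix (Fin d) (Fin d) ℂ) : ℝ :=
  sInf {x : ℝ | ∃ E : Fin m → Matrix (Fin d) (Fin d) ℂ,
    (∀ i, (E i).PosSemidef) ∧ (1 - ∑ i, E i).PosSemidef ∧
    x = ∑ i, ((B i * (1 - E i)).trace).re}




variable {d : ℕ}

open scoped MatrixOrder Matrix.Norms.L2Operator in
noncomputable def Matrix.PosSemidef.sqrt {Q : Matrix (Fin d) (Fin d) ℂ} (_hQ : Q.PosSemidef) :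
    Matrix (Fin d) (Fin d) ℂ :=
  CFC.sqrt Q

open scoped MatrixOrder Matrix.Norms.L2Operator in
lemma Matrix.PosSemidef.sqrt_mul_self {Q : Matrix (Fin d) (Fin d) ℂ} (hQ : Q.PosSemidef) :
    hQ.sqrt * hQ.sqrt = Q :=
  CFC.sqrt_mul_sqrt_self Q hQ.nonneg

open scoped MatrixOrder Matrix.Norms.L2Operator in
lemma Matrix.PosSemidef.posSemidef_sqrt {Q : Matrix (Fin d) (Fin d) ℂ} (hQ : Q.PosSemidef) :
    hQ.sqrt.PosSemidef :=
  (CFC.sqrt_nonneg Q).posSemidef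

lemma psd_trace_re_nonneg {P : Matrix (Fin d) (Fin d) ℂ} (hP : P.PosSemidef) :
    0 ≤ (P.trace).re := by
  have h : ∀ i, 0 ≤ P i i := fun i => by
    exact hP.diag_nonneg
  rw [Matrix.trace, Complex.re_sum]
  exact Finset.sum_nonneg fun i _ => by
    have := Complex.le_def.mp (h i)
    simpa [Matrix.diag] using this.1

lemma psd_mul_trace_re_nonneg {P Q : Matrix (Fin d) (Fin d) ℂ}
    (hP : P.PosSemidef) (hQ : Q.PosSemidef) : 0 ≤ ((P * Q).trace).re := by
  set S := hQ.sqrt with hS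
  have hSS : S * S = Q := hQ.sqrt_mul_self
  have hSH : Sᴴ = S := hQ.posSemidef_sqrt.isHermitian
  have h1 : (P * Q).trace = (S * P * S).trace := by
    rw [← hSS, show P * (S * S) = (P * S) * S by noncomm_ring,
      Matrix.trace_mul_comm, show S * (P * S) = S * P * S by noncomm_ring]
  rw [h1]
  have : (S * P * S).PosSemidef := by
    have := hP.mul_mul_conjTranspose_same S
    rwa [hSH] at this
  exact psd_trace_re_nonneg this

lemma psd_sum {m : ℕ} {E : Fin m → Matrix (Fin d) (Fin d) ℂ} (h : ∀ i, (E i).PosSemidef)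
    {s : Finset (Fin m)} : (∑ i ∈ s, E i).PosSemidef :=
  Finset.sum_induction E _ (fun _ _ ha hb => ha.add hb) .zero (fun i _ => h i)

lemma povm_single_le {m : ℕ} {E : Fin m → Matrix (Fin d) (Fin d) ℂ}
    (h : ∀ i, (E i).PosSemidef) (hsum : (1 - ∑ i, E i).PosSemidef) (i : Fin m) :
    (1 - E i).PosSemidef := by
  have key : 1 - E i = (1 - ∑ j, E j) + ∑ j ∈ Finset.univ.erase i, E j := by
    have := Finset.sum_erase_add Finset.univ E (Finset.mem_univ i)
    rw [← this]; abel
  rw [key]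
  exact hsum.add (psd_sum h)

lemma traceConj (P B Q : Matrix (Fin d) (Fin d) ℂ) :
    ((P * B * P) * Q).trace = (B * (P * Q * P)).trace := by
  rw [show (P * B * P) * Q = P * (B * (P * Q)) by noncomm_ring, Matrix.trace_mul_comm,
    show B * (P * Q) * P = B * (P * Q * P) by noncomm_ring]

lemma key_ineq {A E F0 : Matrix (Fin d) (Fin d) ℂ}
    (hA : A.PosSemidef) (hE : E.PosSemidef) (hF0 : F0.PosSemidef)
    (hE1 : (1 - E).PosSemidef) (hF1 : (1 - F0).PosSemidef) :
    ((A * (1 - F0 * E * F0)).trace).re ≤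
      2 * ((A * (1 - E)).trace).re + 3 * ((A * (1 - F0)).trace).re := by
  have hF0H : F0ᴴ = F0 := hF0.isHermitian
  set S := hF0.sqrt with hSdef
  have hSS : S * S = F0 := hF0.sqrt_mul_self
  have hSH : Sᴴ = S := hF0.posSemidef_sqrt.isHermitian
  -- nonneg gap terms
  have h2F0H : (2 - F0)ᴴ = 2 - F0 := by
    simp [conjTranspose_sub, hF0H]
  have h1F0H : (1 - F0)ᴴ = 1 - F0 := (Matrix.PosSemidef.isHermitian hF1)
  have g1 : 0 ≤ ((A * ((2 - F0) * (1 - E) * (2 - F0))).trace).re := by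
    rw [← traceConj]
    refine psd_mul_trace_re_nonneg ?_ hE1
    have := hA.mul_mul_conjTranspose_same (2 - F0)
    rwa [h2F0H] at this
  have g2 : 0 ≤ ((A * ((1 - F0) * E * (1 - F0))).trace).re := by
    rw [← traceConj]
    refine psd_mul_trace_re_nonneg ?_ hE
    have := hA.mul_mul_conjTranspose_same (1 - F0)
    rwa [h1F0H] at this
  have g3 : 0 ≤ ((A * (F0 - F0 * F0)).trace).re := by
    have hrw : F0 - F0 * F0 = S * (1 - F0) * S := by
      rw [Matrix.mul_sub, Matrix.sub_mul, ← hSS]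
      noncomm_ring
    rw [hrw, ← traceConj]
    refine psd_mul_trace_re_nonneg ?_ hF1
    have := hA.mul_mul_conjTranspose_same S
    rwa [hSH] at this
  -- the algebraic identity
  have hmat : A * (1 - F0 * E * F0) + (A * ((2 - F0) * (1 - E) * (2 - F0)) +
      (A * ((1 - F0) * E * (1 - F0)) + A * ((1 - F0) * E * (1 - F0))) + A * (F0 - F0 * F0)) =
      (A * (1 - E) + A * (1 - E)) + (A * (1 - F0) + A * (1 - F0) + A * (1 - F0)) := by
    noncomm_ring
  have htr := congrArg (fun M => (Matrix.trace M).re) hmat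
  simp only [Matrix.trace_add, Complex.add_re] at htr
  linarith

def errSet {d m : ℕ} (B : Fin m → Matrix (Fin d) (Fin d) ℂ) : Set ℝ :=
  {x : ℝ | ∃ E : Fin m → Matrix (Fin d) (Fin d) ℂ,
    (∀ i, (E i).PosSemidef) ∧ (1 - ∑ i, E i).PosSemidef ∧
    x = ∑ i, ((B i * (1 - E i)).trace).re}

lemma multiErr_eq {d m : ℕ} (B : Fin m → Matrix (Fin d) (Fin d) ℂ) :
    multiErr B = sInf (errSet B) := rfl

lemma errSet_nonempty {d m : ℕ} (B : Fin m → Matrix (Fin d) (Fin d) ℂ) :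
    (errSet B).Nonempty :=
  ⟨_, fun _ => 0, fun _ => .zero, by simpa using (Matrix.PosSemidef.one (n := Fin d) (R := ℂ)), rfl⟩

lemma errSet_nonneg {d m : ℕ} {B : Fin m → Matrix (Fin d) (Fin d) ℂ}
    (hB : ∀ i, (B i).PosSemidef) {x : ℝ} (hx : x ∈ errSet B) : 0 ≤ x := by
  obtain ⟨E, hE, hEsum, rfl⟩ := hx
  exact Finset.sum_nonneg fun i _ =>
    psd_mul_trace_re_nonneg (hB i) (povm_single_le hE hEsum i)

lemma errSet_bddBelow {d m : ℕ} {B : Fin m → Matrix (Fin d) (Fin d) ℂ}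
    (hB : ∀ i, (B i).PosSemidef) : BddBelow (errSet B) :=
  ⟨0, fun _ hx => errSet_nonneg hB hx⟩

theorem nussbaum_decomposition {d r : ℕ}
    (A : Fin r → Matrix (Fin d) (Fin d) ℂ) (hA : ∀ i, (A i).PosSemidef)
    (K : ℕ) (hK1 : 1 ≤ K) (hKr : K ≤ r) :
    multiErr A ≤ 2 * multiErr (fun i : Fin K => A (Fin.castLE hKr i)) +
      multiErr (Fin.cons ((3 : ℂ) • ∑ i : Fin K, A (Fin.castLE hKr i))
        (fun j : Fin (r - K) => A ⟨K + j.1, by have := j.isLt; omega⟩)) := by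
  have hrk : K + (r - K) = r := by omega
  set n2 := r - K with hn2
  set B1 : Fin K → Matrix (Fin d) (Fin d) ℂ := fun i => A (Fin.castLE hKr i) with hB1
  set σ3 : Matrix (Fin d) (Fin d) ℂ := (3 : ℂ) • ∑ i : Fin K, B1 i with hσ3
  set B2 : Fin (n2 + 1) → Matrix (Fin d) (Fin d) ℂ :=
    Fin.cons σ3 (fun j : Fin n2 => A ⟨K + j.1, by have := j.isLt; omega⟩) with hB2
  have hB1psd : ∀ i, (B1 i).PosSemidef := fun i => hA _
  have hB2psd : ∀ i, (B2 i).PosSemidef := by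
    intro i
    induction i using Fin.cases with
    | zero =>
      rw [hB2, Fin.cons_zero, hσ3]
      have hsum : (∑ i : Fin K, B1 i).PosSemidef := psd_sum hB1psd
      have h3 : (3 : ℂ) • ∑ i : Fin K, B1 i =
          (∑ i : Fin K, B1 i) + ((∑ i : Fin K, B1 i) + (∑ i : Fin K, B1 i)) := by
        module
      rw [h3]; exact hsum.add (hsum.add hsum)
    | succ j => rw [hB2, Fin.cons_succ]; exact hA _
  -- sum splitting helper
  have hsplit : ∀ (g : Fin r → ℝ), ∑ i, g i =
      ∑ i : Fin K, g (Fin.cast hrk (Fin.castAdd n2 i)) +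
      ∑ j : Fin n2, g (Fin.cast hrk (Fin.natAdd K j)) := by
    intro g
    rw [← Fin.sum_univ_add (f := fun p : Fin (K + n2) => g (Fin.cast hrk p))]
    exact (Fintype.sum_equiv (finCongr hrk) _ _ fun p => rfl).symm
  have hsplitM : ∀ (g : Fin r → Matrix (Fin d) (Fin d) ℂ), ∑ i, g i =
      ∑ i : Fin K, g (Fin.cast hrk (Fin.castAdd n2 i)) +
      ∑ j : Fin n2, g (Fin.cast hrk (Fin.natAdd K j)) := by
    intro g
    rw [← Fin.sum_univ_add (f := fun p : Fin (K + n2) => g (Fin.cast hrk p))]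
    exact (Fintype.sum_equiv (finCongr hrk) _ _ fun p => rfl).symm
  rw [multiErr_eq, multiErr_eq, multiErr_eq]
  apply le_of_forall_pos_le_add
  intro ε hε
  obtain ⟨x1, hx1s, hx1lt⟩ :=
    Real.lt_sInf_add_pos (errSet_nonempty B1) (show (0:ℝ) < ε/3 by linarith)
  obtain ⟨x2, hx2s, hx2lt⟩ :=
    Real.lt_sInf_add_pos (errSet_nonempty B2) (show (0:ℝ) < ε/3 by linarith)
  obtain ⟨E, hE, hEsum, hx1⟩ := hx1s
  obtain ⟨F, hF, hFsum, hx2⟩ := hx2s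
  set F0 : Matrix (Fin d) (Fin d) ℂ := F 0 with hF0def
  have hF0 : F0.PosSemidef := hF 0
  have hF0H : F0ᴴ = F0 := hF0.isHermitian
  have hF1 : (1 - F0).PosSemidef := povm_single_le hF hFsum 0
  set S : Matrix (Fin d) (Fin d) ℂ := hF0.sqrt with hSdef
  have hSS : S * S = F0 := hF0.sqrt_mul_self
  have hSH : Sᴴ = S := hF0.posSemidef_sqrt.isHermitian
  set f1 : Fin K → Matrix (Fin d) (Fin d) ℂ := fun i => F0 * E i * F0 with hf1
  set f2 : Fin n2 → Matrix (Fin d) (Fin d) ℂ := fun j => F j.succ with hf2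
  set G : Fin r → Matrix (Fin d) (Fin d) ℂ :=
    fun i => Fin.append f1 f2 (Fin.cast hrk.symm i) with hG
  have hG1 : ∀ i : Fin K, G (Fin.cast hrk (Fin.castAdd n2 i)) = F0 * E i * F0 := by
    intro i
    show Fin.append f1 f2 (Fin.cast hrk.symm (Fin.cast hrk (Fin.castAdd n2 i))) = F0 * E i * F0
    rw [show Fin.cast hrk.symm (Fin.cast hrk (Fin.castAdd n2 i)) = Fin.castAdd n2 i from rfl,
      Fin.append_left]
  have hG2 : ∀ j : Fin n2, G (Fin.cast hrk (Fin.natAdd K j)) = F j.succ := by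
    intro j
    show Fin.append f1 f2 (Fin.cast hrk.symm (Fin.cast hrk (Fin.natAdd K j))) = F j.succ
    rw [show Fin.cast hrk.symm (Fin.cast hrk (Fin.natAdd K j)) = Fin.natAdd K j from rfl,
      Fin.append_right]
  have happ : ∀ p : Fin (K + n2), (Fin.append f1 f2 p).PosSemidef := by
    intro p
    induction p using Fin.addCases with
    | left p =>
      rw [Fin.append_left]
      have := (hE p).mul_mul_conjTranspose_same F0
      rwa [hF0H] at this
    | right p => rw [Fin.append_right]; exact hF _
  have hGpsd : ∀ i, (G i).PosSemidef := fun i => happ (Fin.cast hrk.symm i)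
  have hGsum : (1 - ∑ i, G i).PosSemidef := by
    have hkey : (1 - ∑ i, G i) = (1 - ∑ i, F i) +
        (F0 * (1 - ∑ i, E i) * F0 + S * (1 - F0) * S) := by
      rw [hsplitM G]
      simp only [hG1, hG2]
      rw [show ∑ i : Fin K, F0 * E i * F0 = F0 * (∑ i, E i) * F0 by
        rw [Finset.mul_sum, Finset.sum_mul],
        Fin.sum_univ_succ (f := F),
        show S * (1 - F0) * S = F0 - F0 * F0 by
          rw [Matrix.mul_sub, Matrix.sub_mul, Matrix.mul_one, ← hSS]; noncomm_ring]
      rw [← hF0def]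
      noncomm_ring
    rw [hkey]
    refine hFsum.add (Matrix.PosSemidef.add ?_ ?_)
    · have := hEsum.mul_mul_conjTranspose_same F0
      rwa [hF0H] at this
    · have := hF1.mul_mul_conjTranspose_same S
      rwa [hSH] at this
  -- the constructed error value
  have hmem : (∑ i, ((A i * (1 - G i)).trace).re) ∈ errSet A := ⟨G, hGpsd, hGsum, rfl⟩
  have hle1 : sInf (errSet A) ≤ ∑ i, ((A i * (1 - G i)).trace).re :=
    csInf_le (errSet_bddBelow hA) hmem
  -- decompose the error value
  have hsplitG : ∑ i, ((A i * (1 - G i)).trace).re =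
      ∑ i : Fin K, ((B1 i * (1 - F0 * E i * F0)).trace).re +
      ∑ j : Fin n2, ((B2 j.succ * (1 - F j.succ)).trace).re := by
    rw [hsplit (fun i => ((A i * (1 - G i)).trace).re)]
    congr 1
    · apply Finset.sum_congr rfl
      intro i _
      rw [hG1 i]
      rfl
    · apply Finset.sum_congr rfl
      intro j _
      rw [hG2 j, hB2]
      simp only [Fin.cons_succ]
      rfl
  -- x2 decomposition
  have hx2' : x2 = ((σ3 * (1 - F0)).trace).re +
      ∑ j : Fin n2, ((B2 j.succ * (1 - F j.succ)).trace).re := by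
    rw [hx2, Fin.sum_univ_succ, hB2]
    simp only [Fin.cons_zero, Fin.cons_succ]
    rfl
  have hσterm : ((σ3 * (1 - F0)).trace).re =
      3 * ∑ i : Fin K, ((B1 i * (1 - F0)).trace).re := by
    rw [hσ3, Matrix.smul_mul, Matrix.trace_smul, Finset.sum_mul, Matrix.trace_sum]
    rw [smul_eq_mul, Complex.mul_re]
    simp [Complex.re_sum]
  -- per-index inequality
  have hperi : ∀ i : Fin K, ((B1 i * (1 - F0 * E i * F0)).trace).re ≤
      2 * ((B1 i * (1 - E i)).trace).re + 3 * ((B1 i * (1 - F0)).trace).re := by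
    intro i
    exact key_ineq (hB1psd i) (hE i) hF0 (povm_single_le hE hEsum i) hF1
  have hsum1 : ∑ i : Fin K, ((B1 i * (1 - F0 * E i * F0)).trace).re ≤
      2 * x1 + 3 * ∑ i : Fin K, ((B1 i * (1 - F0)).trace).re := by
    rw [hx1, Finset.mul_sum, Finset.mul_sum, ← Finset.sum_add_distrib]
    exact Finset.sum_le_sum fun i _ => hperi i
  have hbound : ∑ i, ((A i * (1 - G i)).trace).re ≤ 2 * x1 + x2 := by
    rw [hsplitG, hx2', hσterm]
    linarith
  calc sInf (errSet A) ≤ 2 * x1 + x2 := le_trans hle1 hbound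
    _ ≤ 2 * (sInf (errSet B1) + ε/3) + (sInf (errSet B2) + ε/3) := by
        have := le_of_lt hx1lt; have := le_of_lt hx2lt; linarith
    _ ≤ 2 * sInf (errSet B1) + sInf (errSet B2) + ε := by linarith
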